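/- Non-collapsibility: there exists a trivariate centered Gaussian distribution with X1 ⊥ X3 | X2 (i.e. ρ_{13|2} = 0) for which I_{12} ≠ I_{12|3}; equivalently, conditional independence of X1 and X3 given X2 does not force δ123 = 0. Concretely, for a positive definite correlation matrix with ρ13 = ρ12 ρ23 and ρ12, ρ23 ≠ 0, δ123 = (1/2) log[(1-ρ_{12|3}²)/(1-ρ12²)] ≠ 0. -/

import Mathlib

open Real

noncomputable def corrMat (ρ12 ρ13 ρ23 : ℝ) : Matrix (Fin 3) (Fin 3) ℝ :=
  !![1, ρ12, ρ13; ρ12, 1, ρ23; ρ13, ρ23, 1]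

noncomputable def gaussEnt (ρ12 ρ13 ρ23 : ℝ) (A : Finset (Fin 3)) : ℝ :=
  (1 / 2) * Real.log
    (((corrMat ρ12 ρ13 ρ23).submatrix
        (fun i : A => (i : Fin 3)) (fun j : A => (j : Fin 3))).det)

noncomputable def delta123 (ρ12 ρ13 ρ23 : ℝ) : ℝ :=
  gaussEnt ρ12 ρ13 ρ23 {0, 1, 2}
    - gaussEnt ρ12 ρ13 ρ23 {0, 1} - gaussEnt ρ12 ρ13 ρ23 {0, 2}
    - gaussEnt ρ12 ρ13 ρ23 {1, 2}
    + gaussEnt ρ12 ρ13 ρ23 {0} + gaussEnt ρ12 ρ13 ρ23 {1}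
    + gaussEnt ρ12 ρ13 ρ23 {2}

noncomputable def partialCorr (ρ12 ρ13 ρ23 : ℝ) : ℝ :=
  (ρ12 - ρ13 * ρ23) / Real.sqrt ((1 - ρ13 ^ 2) * (1 - ρ23 ^ 2))

def eS (i : Fin 3) : Fin 1 ≃ {x // x ∈ ({i} : Finset (Fin 3))} :=
  ⟨fun _ => ⟨i, by simp⟩, fun _ => 0, fun x => by simp [Subsingleton.elim x 0],
   fun x => by rcases x with ⟨x, hx⟩; simp at hx; simp [hx]⟩

def e01 : Fin 2 ≃ {x // x ∈ ({0,1} : Finset (Fin 3))} :=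
  ⟨fun i => ⟨![0,1] i, by fin_cases i <;> decide⟩,
   fun x => if (x:Fin 3) = 0 then 0 else 1, by decide, by decide⟩
def e02 : Fin 2 ≃ {x // x ∈ ({0,2} : Finset (Fin 3))} :=
  ⟨fun i => ⟨![0,2] i, by fin_cases i <;> decide⟩,
   fun x => if (x:Fin 3) = 0 then 0 else 1, by decide, by decide⟩
def e12 : Fin 2 ≃ {x // x ∈ ({1,2} : Finset (Fin 3))} :=
  ⟨fun i => ⟨![1,2] i, by fin_cases i <;> decide⟩,
   fun x => if (x:Fin 3) = 1 then 0 else 1, by decide, by decide⟩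
def e012 : Fin 3 ≃ {x // x ∈ ({0,1,2} : Finset (Fin 3))} :=
  ⟨fun i => ⟨i, by fin_cases i <;> decide⟩, fun x => x, by decide, by decide⟩

lemma gE_single (a b c : ℝ) (i : Fin 3) : gaussEnt a b c {i} = 0 := by
  have : ((corrMat a b c).submatrix
      (fun x : ({i} : Finset (Fin 3)) => (x : Fin 3)) (fun x : ({i} : Finset (Fin 3)) => (x : Fin 3))).det = 1 := by
    rw [← Matrix.det_submatrix_equiv_self (eS i), Matrix.det_fin_one]
    fin_cases i <;> simp [corrMat, eS]
  rw [gaussEnt, this]; simp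

lemma gE01 (a b c : ℝ) : gaussEnt a b c {0,1} = (1/2) * Real.log (1 - a^2) := by
  have : ((corrMat a b c).submatrix
      (fun x : ({0,1} : Finset (Fin 3)) => (x : Fin 3)) (fun x : ({0,1} : Finset (Fin 3)) => (x : Fin 3))).det = 1 - a^2 := by
    rw [← Matrix.det_submatrix_equiv_self e01, Matrix.det_fin_two]
    simp [corrMat, e01]
    ring
  simp [gaussEnt, this]

lemma gE02 (a b c : ℝ) : gaussEnt a b c {0,2} = (1/2) * Real.log (1 - b^2) := by
  have : ((corrMat a b c).submatrix
      (fun x : ({0,2} : Finset (Fin 3)) => (x : Fin 3)) (fun x : ({0,2} : Finset (Fin 3)) => (x : Fin 3))).det = 1 - b^2 := by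
    rw [← Matrix.det_submatrix_equiv_self e02, Matrix.det_fin_two]
    simp [corrMat, e02]
    ring
  simp [gaussEnt, this]

lemma gE12 (a b c : ℝ) : gaussEnt a b c {1,2} = (1/2) * Real.log (1 - c^2) := by
  have : ((corrMat a b c).submatrix
      (fun x : ({1,2} : Finset (Fin 3)) => (x : Fin 3)) (fun x : ({1,2} : Finset (Fin 3)) => (x : Fin 3))).det = 1 - c^2 := by
    rw [← Matrix.det_submatrix_equiv_self e12, Matrix.det_fin_two]
    simp [corrMat, e12]
    ring
  simp [gaussEnt, this]

lemma gE012 (a b c : ℝ) : gaussEnt a b c {0,1,2}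
    = (1/2) * Real.log (1 - a^2 - b^2 - c^2 + 2*a*b*c) := by
  have : ((corrMat a b c).submatrix
      (fun x : ({0,1,2} : Finset (Fin 3)) => (x : Fin 3)) (fun x : ({0,1,2} : Finset (Fin 3)) => (x : Fin 3))).det
      = 1 - a^2 - b^2 - c^2 + 2*a*b*c := by
    rw [← Matrix.det_submatrix_equiv_self e012, Matrix.det_fin_three]
    simp [corrMat, e012]
    ring
  simp [gaussEnt, this]

theorem stmt_18 (ρ12 ρ13 ρ23 : ℝ) (hpd : (corrMat ρ12 ρ13 ρ23).PosDef)
    (hci : ρ13 = ρ12 * ρ23) (h12 : ρ12 ≠ 0) (h23 : ρ23 ≠ 0) :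
    delta123 ρ12 ρ13 ρ23
        = (1 / 2) * Real.log ((1 - (partialCorr ρ12 ρ13 ρ23) ^ 2) / (1 - ρ12 ^ 2))
      ∧ delta123 ρ12 ρ13 ρ23 ≠ 0 := by
  have hA : 0 < 1 - ρ12^2 := by
    have := hpd.dotProduct_mulVec_pos (x := ![1, -ρ12, 0]) (by
      intro h; have := congrFun h 0; simp at this)
    simp [corrMat, Matrix.mulVec, dotProduct, Fin.sum_univ_three] at this
    nlinarith [this]
  have hC : 0 < 1 - ρ23^2 := by
    have := hpd.dotProduct_mulVec_pos (x := ![0, 1, -ρ23]) (by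
      intro h; have := congrFun h 1; simp at this)
    simp [corrMat, Matrix.mulVec, dotProduct, Fin.sum_univ_three] at this
    nlinarith [this]
  have hB : 0 < 1 - ρ13^2 := by
    rw [hci]; nlinarith [sq_nonneg ρ12, sq_nonneg ρ23]
  have h13 : ρ13 ≠ 0 := by rw [hci]; exact mul_ne_zero h12 h23
  have h13sq : 0 < ρ13^2 :=
    lt_of_le_of_ne (sq_nonneg _) (Ne.symm (pow_ne_zero 2 h13))
  have hlt : 1 - ρ13^2 < 1 := by linarith
  have hdelta : delta123 ρ12 ρ13 ρ23 = -((1/2) * Real.log (1 - ρ13^2)) := by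
    unfold delta123
    rw [gE012, gE01, gE02, gE12, gE_single, gE_single, gE_single]
    have hD : 1 - ρ12^2 - ρ13^2 - ρ23^2 + 2*ρ12*ρ13*ρ23 = (1-ρ12^2)*(1-ρ23^2) := by
      rw [hci]; ring
    rw [hD, Real.log_mul hA.ne' hC.ne']
    ring
  have hB2 : (1 - (ρ12*ρ23)^2) ≠ 0 := by rw [← hci]; exact hB.ne'
  have hp : (1 - (partialCorr ρ12 ρ13 ρ23)^2) / (1 - ρ12^2) = 1 / (1 - ρ13^2) := by
    unfold partialCorr
    rw [div_pow, Real.sq_sqrt (by positivity)]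
    rw [hci]
    have hB3 : (1 - ρ12^2*ρ23^2) ≠ 0 := by rw [← mul_pow]; exact hB2
    field_simp [hB3, hA.ne', hC.ne']
    ring
  constructor
  · rw [hdelta, hp, Real.log_div one_ne_zero hB.ne', Real.log_one]; ring
  · rw [hdelta]
    have hlog := Real.log_neg hB hlt
    intro h
    nlinarith [hlog]
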